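/- For d ≥ 5 odd, the discriminant of the polynomial x^{d-3}(x+1)^3 − t^2 in the variable x equals (−1)^{(d−1)/2} t^{2d−4} (d^d t^2 − 27 (d−3)^{d−3}). -/

import Mathlib

open Polynomial

noncomputable def polyDisc {K : Type*} [Field K] (f : K[X]) : K :=
  (-1) ^ (f.natDegree * (f.natDegree - 1) / 2) * f.leadingCoeff ^ (f.natDegree - 2) *
    (f.roots.map fun r => (derivative f).eval r).prod

theorem disc_pow_mul_cube_sub_sq {K : Type*} [Field K] [IsAlgClosed K] [CharZero K]
    (d : ℕ) (hd : 5 ≤ d) (hodd : Odd d) (t : K) :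
    polyDisc ((X : K[X]) ^ (d - 3) * (X + C 1) ^ 3 - C (t ^ 2)) =
      (-1 : K) ^ ((d - 1) / 2) * t ^ (2 * d - 4) *
        ((d : K) ^ d * t ^ 2 - 27 * ((d : K) - 3) ^ (d - 3)) := by
  have hdK : (d : K) ≠ 0 := Nat.cast_ne_zero.mpr (by omega)
  set f : K[X] := X ^ (d - 3) * (X + C 1) ^ 3 - C (t ^ 2) with hf
  have hgmonic : ((X : K[X]) ^ (d - 3) * (X + C 1) ^ 3).Monic :=
    (monic_X_pow _).mul ((monic_X_add_C 1).pow 3)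
  have hgdeg : ((X : K[X]) ^ (d - 3) * (X + C 1) ^ 3).natDegree = d := by
    rw [(monic_X_pow _).natDegree_mul ((monic_X_add_C 1).pow 3), natDegree_pow,
      natDegree_pow, natDegree_X, natDegree_X_add_C]
    omega
  have hfdeg : f.natDegree = d := by rw [hf, natDegree_sub_C, hgdeg]
  have hfmonic : f.Monic := by
    rw [hf, sub_eq_add_neg, ← C_neg]
    refine hgmonic.add_of_left ?_
    refine lt_of_le_of_lt (degree_C_le) ?_
    rw [degree_eq_natDegree hgmonic.ne_zero, hgdeg]
    exact_mod_cast (by omega : 0 < d)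
  have hsplits : f.Splits := IsAlgClosed.splits f
  have hcard : f.roots.card = d := by
    rw [splits_iff_card_roots.mp hsplits, hfdeg]
  -- eval of f at any point is the product over roots
  have heval : ∀ v : K, f.eval v = (f.roots.map fun a => v - a).prod :=
    fun v => hsplits.eval_eq_prod_roots_of_monic hfmonic v
  -- linear products
  have hlin : ∀ b c : K, (f.roots.map fun r => b * r + c).prod
      = (-b) ^ d * f.eval (-(c / b)) ∨ b = 0 := by
    intro b c
    by_cases hb : b = 0
    · right; exact hb
    left
    rw [heval, ← hcard,
      show ((-b) ^ (Multiset.card f.roots) : K) = (f.roots.map fun _ => -b).prod by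
        rw [Multiset.map_const', Multiset.prod_replicate],
      ← Multiset.prod_map_mul]
    refine congrArg Multiset.prod (Multiset.map_congr rfl fun r _ => ?_)
    field_simp
    ring
  have hev3 : Even (d - 3) := Nat.Odd.sub_odd hodd (by decide)
  -- derivative
  have hder : derivative f = X ^ (d - 4) * (X + C 1) ^ 2 * (C (d : K) * X + C ((d : K) - 3)) := by
    rw [hf]
    simp only [derivative_sub, derivative_C, sub_zero, derivative_mul, derivative_X_pow,
      derivative_pow, derivative_add, derivative_X, derivative_one, add_zero, mul_one,
      Nat.cast_sub (by omega : 3 ≤ d), map_sub, Nat.cast_ofNat, map_ofNat, map_one]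
    rw [show d - 3 - 1 = d - 4 by omega, show d - 3 = (d - 4) + 1 by omega, pow_succ]
    ring
  -- product of roots
  have hP1 : (f.roots.map fun r => r).prod = t ^ 2 := by
    have h := (hlin 1 0).resolve_right one_ne_zero
    simp only [one_mul, add_zero, zero_div, neg_zero] at h
    rw [h, hodd.neg_one_pow, hf]
    simp [zero_pow (by omega : d - 3 ≠ 0)]
  have hP2 : (f.roots.map fun r => r + 1).prod = t ^ 2 := by
    have h := (hlin 1 1).resolve_right one_ne_zero
    simp only [one_mul, div_one] at h
    rw [h, hodd.neg_one_pow, hf]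
    simp
  have hevald : f.eval (-(((d : K) - 3) / (d : K))) =
      27 * ((d : K) - 3) ^ (d - 3) / (d : K) ^ d - t ^ 2 := by
    rw [hf]
    simp only [eval_sub, eval_mul, eval_pow, eval_add, eval_X, eval_C]
    rw [hev3.neg_pow, show (-(((d : K) - 3) / (d : K)) + 1) = 3 / (d : K) by
        field_simp
        ring,
      div_pow, div_pow, div_mul_div_comm, ← pow_add, show (d - 3) + 3 = d by omega]
    ring
  have hP3 : (f.roots.map fun r => (d : K) * r + ((d : K) - 3)).prod =
      (d : K) ^ d * t ^ 2 - 27 * ((d : K) - 3) ^ (d - 3) := by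
    have h := (hlin (d : K) ((d : K) - 3)).resolve_right hdK
    rw [h, hevald, hodd.neg_pow]
    field_simp
    ring
  -- assemble the product of derivative evaluations
  have hprod : (f.roots.map fun r => (derivative f).eval r).prod =
      (t ^ 2) ^ (d - 4) * (t ^ 2) ^ 2 *
        ((d : K) ^ d * t ^ 2 - 27 * ((d : K) - 3) ^ (d - 3)) := by
    simp only [hder, eval_mul, eval_pow, eval_add, eval_X, eval_C]
    rw [Multiset.prod_map_mul, Multiset.prod_map_mul, Multiset.prod_map_pow,
      Multiset.prod_map_pow, hP1, hP2, hP3]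
  -- sign
  have hsign : ((-1 : K)) ^ (d * (d - 1) / 2) = (-1 : K) ^ ((d - 1) / 2) := by
    rw [Nat.mul_div_assoc d ((Nat.Odd.sub_odd hodd odd_one).two_dvd), pow_mul,
      hodd.neg_one_pow]
  rw [polyDisc, hfdeg, hfmonic.leadingCoeff, one_pow, mul_one, hprod, hsign,
    ← pow_mul, ← pow_mul, ← pow_add, show 2 * (d - 4) + 2 * 2 = 2 * d - 4 by omega]
  ring
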